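/- For every positive integer k, one has κ(2, 3, 6k+1) = k. -/

import Mathlib

private lemma my_le_ediv (a b q : ℤ) (hb : 0 < b) (h : b * q ≤ a) : q ≤ a / b :=
  (Int.le_ediv_iff_mul_le hb).mpr (by linarith [mul_comm b q])

private lemma my_ediv_le (a b q : ℤ) (hb : 0 < b) (h : a < b * (q + 1)) : a / b ≤ q := by
  have h1 := Int.emod_nonneg a (ne_of_gt hb)
  have h2 := Int.mul_ediv_add_emod a b
  have : b * (a / b) < b * (q + 1) := by linarith
  have := lt_of_mul_lt_mul_left this (le_of_lt hb)
  omega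

private lemma my_ediv_eq (a b q : ℤ) (hb : 0 < b) (h1 : b * q ≤ a) (h2 : a < b * (q + 1)) :
    a / b = q :=
  le_antisymm (my_ediv_le a b q hb h2) (my_le_ediv a b q hb h1)

private lemma my_ceil_div (a b : ℤ) (hb : 0 < b) :
    ⌈(a : ℚ) / (b : ℚ)⌉ = (a + b - 1) / b := by
  have hbq : (0:ℚ) < (b:ℚ) := by exact_mod_cast hb
  rw [Int.ceil_eq_iff]
  set q := (a + b - 1) / b with hq
  have h1 : b * q ≤ a + b - 1 := by
    have := Int.emod_nonneg (a+b-1) (ne_of_gt hb)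
    have := Int.mul_ediv_add_emod (a+b-1) b
    linarith
  have h2 : a + b - 1 < b * (q + 1) := by
    have := Int.emod_lt_of_pos (a+b-1) hb
    have := Int.mul_ediv_add_emod (a+b-1) b
    nlinarith
  constructor
  · rw [lt_div_iff₀ hbq]
    have : (q - 1) * b < a := by nlinarith
    exact_mod_cast this
  · rw [div_le_iff₀ hbq]
    have : a ≤ q * b := by nlinarith
    exact_mod_cast this

private lemma delta_neg (k n : ℕ) (hk : 0 < k) (h1 : n % 6 = 1) (h2 : n / 6 < k) :
    1 + (n:ℤ) - ((n:ℤ)+1)/2 - ((n:ℤ)+2)/3 - ((n:ℤ)*(k:ℤ) + 6*(k:ℤ))/(6*(k:ℤ)+1) = -1 := by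
  have hK : (1:ℤ) ≤ (k:ℤ) := by exact_mod_cast hk
  have hB : (0:ℤ) < 6*(k:ℤ)+1 := by linarith
  obtain ⟨a, hadef⟩ : ∃ a : ℤ, a = ((n/6 : ℕ) : ℤ) := ⟨_, rfl⟩
  have ha0 : (0:ℤ) ≤ a := by omega
  have hak : a < (k:ℤ) := by omega
  have hn : (n:ℤ) = 6*a + 1 := by omega
  have hsplit : (n:ℤ)*(k:ℤ) + 6*(k:ℤ)
      = ((k:ℤ) - a + 6*(k:ℤ)) + (6*(k:ℤ)+1)*a := by rw [hn]; ring
  rw [hsplit, Int.add_mul_ediv_left _ a (ne_of_gt hB)]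
  have he : ((k:ℤ) - a + 6*(k:ℤ))/(6*(k:ℤ)+1) = 1 :=
    my_ediv_eq _ _ _ hB (by linarith) (by linarith)
  rw [he]
  omega

private lemma delta_nonneg (k n : ℕ) (hk : 0 < k) (h : ¬(n % 6 = 1 ∧ n / 6 < k)) :
    0 ≤ 1 + (n:ℤ) - ((n:ℤ)+1)/2 - ((n:ℤ)+2)/3 - ((n:ℤ)*(k:ℤ) + 6*(k:ℤ))/(6*(k:ℤ)+1) := by
  have hK : (1:ℤ) ≤ (k:ℤ) := by exact_mod_cast hk
  have hB : (0:ℤ) < 6*(k:ℤ)+1 := by linarith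
  obtain ⟨a, hadef⟩ : ∃ a : ℤ, a = ((n/6 : ℕ) : ℤ) := ⟨_, rfl⟩
  have ha0 : (0:ℤ) ≤ a := by omega
  obtain ⟨b, hb, hnb⟩ : ∃ b, b < 6 ∧ n % 6 = b := ⟨n % 6, Nat.mod_lt _ (by norm_num), rfl⟩
  have hn : (n:ℤ) = 6*a + (b:ℤ) := by omega
  have hsplit : (n:ℤ)*(k:ℤ) + 6*(k:ℤ)
      = ((b:ℤ)*(k:ℤ) - a + 6*(k:ℤ)) + (6*(k:ℤ)+1)*a := by rw [hn]; ring
  rw [hsplit, Int.add_mul_ediv_left _ a (ne_of_gt hB)]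
  generalize hE : ((b:ℤ)*(k:ℤ) - a + 6*(k:ℤ))/(6*(k:ℤ)+1) = E
  interval_cases b
  · have hE1 : E ≤ 1 := by
      rw [← hE]; exact my_ediv_le _ _ 1 hB (by push_cast; linarith)
    omega
  · have hge' : (k:ℤ) ≤ a := by omega
    have hE0 : E ≤ 0 := by
      rw [← hE]; exact my_ediv_le _ _ 0 hB (by push_cast; linarith)
    omega
  · have hE1 : E ≤ 1 := by
      rw [← hE]; exact my_ediv_le _ _ 1 hB (by push_cast; linarith)
    omega
  · have hE1 : E ≤ 1 := by
      rw [← hE]; exact my_ediv_le _ _ 1 hB (by push_cast; linarith)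
    omega
  · have hE1 : E ≤ 1 := by
      rw [← hE]; exact my_ediv_le _ _ 1 hB (by push_cast; linarith)
    omega
  · have hE1 : E ≤ 1 := by
      rw [← hE]; exact my_ediv_le _ _ 1 hB (by push_cast; linarith)
    omega

/-- For every positive integer `k`, one has `κ(2, 3, 6k+1) = k`. -/
theorem stmt_16 (k : ℕ) (hk : 0 < k)
    (e0 : ℤ) (p' q' r' : ℕ)
    (hp' : p' ≤ 2 - 1) (hq' : q' ≤ 3 - 1) (hr' : r' ≤ (6 * k + 1) - 1)
    (heq : e0 * (2 * 3 * (6 * (k : ℤ) + 1)) + (p' : ℤ) * 3 * (6 * (k : ℤ) + 1)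
      + 2 * (q' : ℤ) * (6 * (k : ℤ) + 1) + 2 * 3 * (r' : ℤ) = -1)
    (Δ : ℕ → ℤ)
    (hΔ : ∀ n : ℕ, Δ n = 1 + |e0| * n - ⌈(n * p' : ℚ) / 2⌉ - ⌈(n * q' : ℚ) / 3⌉
      - ⌈(n * r' : ℚ) / (6 * (k : ℚ) + 1)⌉) :
    |∑ᶠ n : ℕ, min 0 (Δ n)| = (k : ℤ) := by
  have hK : (1:ℤ) ≤ (k:ℤ) := by exact_mod_cast hk
  -- Step 1: determine the parameters
  obtain ⟨m, hmdef⟩ : ∃ m : ℤ, m = -(e0*6 + 3*(p':ℤ) + 2*(q':ℤ)) := ⟨_, rfl⟩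
  have hm1 : 6*(r':ℤ) + 1 = m * (6*(k:ℤ)+1) := by rw [hmdef]; linear_combination heq
  have hr'z : (r':ℤ) ≤ 6*(k:ℤ) := by omega
  have hr'0 : (0:ℤ) ≤ (r':ℤ) := Int.natCast_nonneg _
  have hmpos : 1 ≤ m := by nlinarith
  have hmle : m ≤ 5 := by nlinarith
  have hparams : p' = 1 ∧ q' = 1 ∧ r' = k ∧ e0 = -1 := by
    interval_cases m <;> omega
  obtain ⟨hp1, hq1, hr1, he0⟩ := hparams
  subst hp1 hq1 he0
  -- Step 2: simplify Δ
  have hΔ' : ∀ n : ℕ, Δ n = 1 + (n:ℤ) - ((n:ℤ)+1)/2 - ((n:ℤ)+2)/3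
      - ((n:ℤ)*(k:ℤ) + 6*(k:ℤ))/(6*(k:ℤ)+1) := by
    intro n
    rw [hΔ n, hr1]
    have c2 : ⌈((n:ℚ) * ((1:ℕ):ℚ)) / 2⌉ = ((n:ℤ)+1)/2 := by
      have h := my_ceil_div (n:ℤ) 2 (by norm_num)
      rw [show ((n:ℤ) + 2 - 1) = ((n:ℤ)+1) by ring] at h
      rw [← h]; congr 1; push_cast; ring
    have c3 : ⌈((n:ℚ) * ((1:ℕ):ℚ)) / 3⌉ = ((n:ℤ)+2)/3 := by
      have h := my_ceil_div (n:ℤ) 3 (by norm_num)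
      rw [show ((n:ℤ) + 3 - 1) = ((n:ℤ)+2) by ring] at h
      rw [← h]; congr 1; push_cast; ring
    have cB : ⌈((n:ℚ) * ((k:ℕ):ℚ)) / (6*(k:ℚ)+1)⌉
        = ((n:ℤ)*(k:ℤ) + 6*(k:ℤ))/(6*(k:ℤ)+1) := by
      have h := my_ceil_div ((n:ℤ)*(k:ℤ)) (6*(k:ℤ)+1) (by linarith)
      rw [show ((n:ℤ)*(k:ℤ) + (6*(k:ℤ)+1) - 1) = ((n:ℤ)*(k:ℤ) + 6*(k:ℤ)) by ring] at h
      rw [← h]; congr 1; push_cast; ring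
    rw [c2, c3, cB]
    simp
  -- Step 3: pointwise formula for the summand
  have hf : ∀ n : ℕ, min 0 (Δ n) = if n % 6 = 1 ∧ n / 6 < k then -1 else 0 := by
    intro n
    split
    · next h =>
      have hD : Δ n = -1 := by rw [hΔ' n]; exact delta_neg k n hk h.1 h.2
      rw [hD]; simp
    · next h =>
      have hD : 0 ≤ Δ n := by rw [hΔ' n]; exact delta_nonneg k n hk h
      exact min_eq_left hD
  -- Step 4: compute the finsum
  have hsupp : Function.support (fun n : ℕ => min 0 (Δ n))
      ⊆ ((Finset.range k).image (fun j => 6*j+1) : Finset ℕ) := by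
    intro n hn
    simp only [Function.mem_support] at hn
    rw [hf n] at hn
    by_cases hc : n % 6 = 1 ∧ n / 6 < k
    · simp only [Finset.coe_image, Finset.coe_range, Set.mem_image, Set.mem_Iio]
      exact ⟨n / 6, hc.2, by omega⟩
    · simp [hc] at hn
  rw [finsum_eq_sum_of_support_subset _ hsupp]
  rw [Finset.sum_image (by intro i _ j _ hij; simp only at hij; omega)]
  have : ∀ j ∈ Finset.range k, min 0 (Δ (6*j+1)) = -1 := by
    intro j hj
    rw [hf (6*j+1)]
    have : (6*j+1) % 6 = 1 ∧ (6*j+1) / 6 < k := by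
      constructor
      · omega
      · have : (6*j+1)/6 = j := by omega
        rw [this]; exact Finset.mem_range.mp hj
    simp [this]
  rw [Finset.sum_congr rfl this]
  simp [Finset.sum_const, Finset.card_range, abs_of_nonneg]
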